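/- With abelian recollement gluing data, for every object N of 𝒜_U the intermediate extension j_!* N admits no nonzero subobject supported on Z: if X ↪ j_!* N is a monomorphism in 𝒜 with j^* X ≅ 0, then X ≅ 0. -/

import Mathlib

/-!
Abelian recollement gluing data, abstracting the open immersion `j : U → S`:
abelian categories `A` and `B` (the latter playing the role of `𝒜_U`), an exact
functor `jstar : A ⥤ B` with a left adjoint `jlow` (`j_!`) and a right adjoint
`jup` (`j_*`), such that the unit of `j_! ⊣ j^*` and the counit of `j^* ⊣ j_*`
are isomorphisms.  For `N : B`, `cmap N : j_! N ⟶ j_* N` is the unique morphism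
whose image under `j^*` is `id_N` (under the canonical identifications), and the
intermediate extension `j_!* N` is its image.  "`X` is supported on `Z`" means
`j^* X ≅ 0`, i.e. `IsZero (jstar.obj X)`.
-/

open CategoryTheory CategoryTheory.Limits

variable {A : Type*} [Category A] [Abelian A]
variable {B : Type*} [Category B] [Abelian B]

/-- The canonical morphism `c_N : j_! N ⟶ j_* N`, corresponding under the
adjunction `j_! ⊣ j^*` to the inverse of the counit `j^* j_* N ≅ N`. -/
noncomputable def cmap (jstar : A ⥤ B) (jlow jup : B ⥤ A)
    (adj1 : jlow ⊣ jstar) (adj2 : jstar ⊣ jup) [IsIso adj2.counit] (N : B) :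
    jlow.obj N ⟶ jup.obj N :=
  (adj1.homEquiv N (jup.obj N)).symm (inv (adj2.counit.app N))

/-- The intermediate extension `j_!* N := Im (c_N : j_! N ⟶ j_* N)`. -/
noncomputable def interExt (jstar : A ⥤ B) (jlow jup : B ⥤ A)
    (adj1 : jlow ⊣ jstar) (adj2 : jstar ⊣ jup) [IsIso adj2.counit] (N : B) : A :=
  image (cmap jstar jlow jup adj1 adj2 N)

/-- the intermediate extension `j_!* N` admits no nonzero subobject
supported on `Z`: if `X ↪ j_!* N` is a monomorphism with `j^* X ≅ 0`, then
`X ≅ 0`. -/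
theorem interExt_no_subobject_supported
    (jstar : A ⥤ B) (jlow jup : B ⥤ A)
    (adj1 : jlow ⊣ jstar) (adj2 : jstar ⊣ jup)
    [IsIso adj1.unit] [IsIso adj2.counit]
    [PreservesFiniteLimits jstar] [PreservesFiniteColimits jstar]
    (N : B) (X : A) (f : X ⟶ interExt jstar jlow jup adj1 adj2 N) [Mono f]
    (hX : IsZero (jstar.obj X)) :
    IsZero X := by
  haveI : PreservesLimits jup := adj2.rightAdjoint_preservesLimits
  haveI := preservesBinaryBiproducts_of_preservesBinaryProducts jup
  haveI : jup.Additive := Functor.additive_of_preservesBinaryBiproducts jup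
  set g : X ⟶ jup.obj N := f ≫ image.ι (cmap jstar jlow jup adj1 adj2 N) with hg
  haveI : Mono g := @mono_comp _ _ _ _ _ f _ (image.ι (cmap jstar jlow jup adj1 adj2 N)) (Image.monoFactorisation _).m_mono
  have hzero : (adj2.homEquiv X N).symm g = 0 := hX.eq_of_src _ _
  have : g = 0 := by
    have := (adj2.homEquiv X N).apply_symm_apply g
    rw [hzero] at this
    rw [← this, Adjunction.homEquiv_apply, Functor.map_zero, comp_zero]
  rw [IsZero.iff_id_eq_zero]
  have : 𝟙 X ≫ g = 0 ≫ g := by simp [this]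
  exact Mono.right_cancellation _ _ this
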